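/- There exists a nonzero constant k ∈ ℂ such that the Jacobian determinant of (C₆, C₉, C₁₂) with respect to (u,v,w) equals k·C'₁₂(u,v,w)² as polynomials in u, v, w; in particular the zero set of this Jacobian consists of the twelve mirror planes. -/
import Mathlib


open Matrix Complex

noncomputable section

def ε : ℂ := Complex.exp (2 * Real.pi * Complex.I / 3)

lemma hε : IsPrimitiveRoot ε 3 := by
  have := Complex.isPrimitiveRoot_exp 3 (by norm_num)
  simpa [ε] using this

lemma hε3 : ε ^ 3 = 1 := hε.pow_eq_one

lemma hεne0 : ε ≠ 0 := by
  intro h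
  have := hε3
  rw [h] at this
  simp at this

lemma hεne1 : ε ≠ 1 := hε.ne_one (by norm_num)

def matA : Matrix (Fin 3) (Fin 3) ℂ := !![0,1,0; 0,0,1; 1,0,0]
def matB : Matrix (Fin 3) (Fin 3) ℂ := !![1,0,0; 0,0,1; 0,1,0]
def matC : Matrix (Fin 3) (Fin 3) ℂ := !![1,0,0; 0,ε,0; 0,0,ε^2]
def matD : Matrix (Fin 3) (Fin 3) ℂ := !![1,0,0; 0,ε,0; 0,0,ε]
def matE : Matrix (Fin 3) (Fin 3) ℂ :=
  (Complex.I * Real.sqrt 3)⁻¹ • !![1,1,1; 1,ε,ε^2; 1,ε^2,ε]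

lemma detA : matA.det ≠ 0 := by
  simp [matA, Matrix.det_fin_three]

lemma detC : matC.det ≠ 0 := by
  simp [matC, Matrix.det_fin_three]
  exact fun h => hεne0 h

lemma detD : matD.det ≠ 0 := by
  simp [matD, Matrix.det_fin_three]
  exact fun h => hεne0 h

lemma detE : matE.det ≠ 0 := by
  have h1 : (!![1,1,1; 1,ε,ε^2; 1,ε^2,ε] : Matrix (Fin 3) (Fin 3) ℂ).det
      = 3 * ε * (ε - 1) := by
    have h4 : ε ^ 4 = ε := by
      calc ε ^ 4 = ε ^ 3 * ε := by ring
      _ = ε := by rw [hε3]; ring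
    simp [Matrix.det_fin_three, Matrix.vecHead, Matrix.vecTail]
    linear_combination (-1 : ℂ) * h4
  have h2 : (Complex.I * (Real.sqrt 3 : ℂ)) ≠ 0 :=
    mul_ne_zero Complex.I_ne_zero
      (by exact_mod_cast (Real.sqrt_pos.mpr (by norm_num : (0:ℝ) < 3)).ne')
  rw [matE, Matrix.det_smul, h1]
  apply mul_ne_zero
  · apply pow_ne_zero; exact inv_ne_zero h2
  · apply mul_ne_zero (mul_ne_zero (by norm_num) hεne0)
    exact sub_ne_zero.mpr hεne1

def genA : GL (Fin 3) ℂ := Matrix.GeneralLinearGroup.mkOfDetNeZero matA detA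
def genB : GL (Fin 3) ℂ := Matrix.GeneralLinearGroup.mkOfDetNeZero matB (by simp [matB, Matrix.det_fin_three])
def genC : GL (Fin 3) ℂ := Matrix.GeneralLinearGroup.mkOfDetNeZero matC detC
def genD : GL (Fin 3) ℂ := Matrix.GeneralLinearGroup.mkOfDetNeZero matD detD
def genE : GL (Fin 3) ℂ := Matrix.GeneralLinearGroup.mkOfDetNeZero matE detE

def K : Subgroup (GL (Fin 3) ℂ) := Subgroup.closure {genA, genC, genD, genE}

open MvPolynomial in
def pC6 : MvPolynomial (Fin 3) ℂ :=
  X 0 ^ 6 + X 1 ^ 6 + X 2 ^ 6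
    - 10 * (X 0 ^ 3 * X 1 ^ 3 + X 0 ^ 3 * X 2 ^ 3 + X 1 ^ 3 * X 2 ^ 3)

open MvPolynomial in
def pC9 : MvPolynomial (Fin 3) ℂ :=
  (X 0 ^ 3 - X 1 ^ 3) * (X 0 ^ 3 - X 2 ^ 3) * (X 1 ^ 3 - X 2 ^ 3)

open MvPolynomial in
def pC12 : MvPolynomial (Fin 3) ℂ :=
  (X 0 ^ 12 + X 1 ^ 12 + X 2 ^ 12)
    + 4 * (X 0 ^ 9 * X 1 ^ 3 + X 0 ^ 9 * X 2 ^ 3 + X 1 ^ 9 * X 0 ^ 3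
        + X 1 ^ 9 * X 2 ^ 3 + X 2 ^ 9 * X 0 ^ 3 + X 2 ^ 9 * X 1 ^ 3)
    + 6 * (X 0 ^ 6 * X 1 ^ 6 + X 0 ^ 6 * X 2 ^ 6 + X 1 ^ 6 * X 2 ^ 6)
    + 228 * (X 0 ^ 6 * X 1 ^ 3 * X 2 ^ 3 + X 1 ^ 6 * X 0 ^ 3 * X 2 ^ 3
        + X 2 ^ 6 * X 0 ^ 3 * X 1 ^ 3)

open MvPolynomial in
def pC'12 : MvPolynomial (Fin 3) ℂ :=
  X 0 * X 1 * X 2 * (X 0 + X 1 + X 2) * (C ε * X 0 + X 1 + X 2) *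
    (X 0 + C ε * X 1 + X 2) * (C (ε ^ 2) * X 0 + C ε * X 1 + X 2) *
    (X 0 + C (ε ^ 2) * X 1 + X 2) * (C ε * X 0 + C ε * X 1 + X 2) *
    (C (ε ^ 2) * X 0 + X 1 + X 2) * (C ε * X 0 + C (ε ^ 2) * X 1 + X 2) *
    (C (ε ^ 2) * X 0 + C (ε ^ 2) * X 1 + X 2)

def jacobianC : MvPolynomial (Fin 3) ℂ :=
  Matrix.det (Matrix.of fun i j : Fin 3 => MvPolynomial.pderiv j (![pC6, pC9, pC12] i))


open MvPolynomial

lemma hquad : ε ^ 2 + ε + 1 = 0 := by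
  have h : (ε - 1) * (ε ^ 2 + ε + 1) = 0 := by linear_combination hε3
  exact (mul_eq_zero.mp h).resolve_left (sub_ne_zero.mpr hεne1)

lemma prod9 (u v w : ℂ) :
    (u + v + w) * (ε * u + v + w) * (u + ε * v + w) * (ε ^ 2 * u + ε * v + w) *
      (u + ε ^ 2 * v + w) * (ε * u + ε * v + w) * (ε ^ 2 * u + v + w) *
      (ε * u + ε ^ 2 * v + w) * (ε ^ 2 * u + ε ^ 2 * v + w)
    = (u ^ 3 + v ^ 3 + w ^ 3) ^ 3 - 27 * u ^ 3 * v ^ 3 * w ^ 3 := by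
  linear_combination ((3) * v * w^8 + (3) * v^2 * w^7 + ((-2)) * v^3 * w^6 + ((-3)) * v^6 * w^3 + ((-1)) * v^9 + (3) * u * w^8 + (8) * u * v * w^7 + (7) * u * v^2 * w^6 + (2) * u * v^3 * w^5 + (3) * u^2 * w^7 + (7) * u^2 * v * w^6 + (5) * u^2 * v^2 * w^5 + (1) * u^2 * v^3 * w^4 + ((-2)) * u^3 * w^6 + (2) * u^3 * v * w^5 + (1) * u^3 * v^2 * w^4 + (21) * u^3 * v^3 * w^3 + ((-3)) * u^3 * v^6 + ((-3)) * u^6 * w^3 + ((-3)) * u^6 * v^3 + ((-1)) * u^9 + (6) * ε * v^2 * w^7 + (11) * ε * v^3 * w^6 + (3) * ε * v^4 * w^5 + (3) * ε * v^6 * w^3 + (1) * ε * v^9 + (8) * ε * u * v * w^7 + (21) * ε * u * v^2 * w^6 + (18) * ε * u * v^3 * w^5 + (5) * ε * u * v^4 * w^4 + (6) * ε * u^2 * w^7 + (21) * ε * u^2 * v * w^6 + (27) * ε * u^2 * v^2 * w^5 + (14) * ε * u^2 * v^3 * w^4 + (2) * ε * u^2 * v^4 * w^3 + (11) * ε * u^3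 * w^6 + (18) * ε * u^3 * v * w^5 + (14) * ε * u^3 * v^2 * w^4 + ((-17)) * ε * u^3 * v^3 * w^3 + (3) * ε * u^3 * v^6 + (3) * ε * u^4 * w^5 + (5) * ε * u^4 * v * w^4 + (2) * ε * u^4 * v^2 * w^3 + (3) * ε * u^6 * w^3 + (3) * ε * u^6 * v^3 + (1) * ε * u^9 + (3) * ε^2 * v^2 * w^7 + (9) * ε^2 * v^3 * w^6 + (9) * ε^2 * v^4 * w^5 + (3) * ε^2 * v^5 * w^4 + (8) * ε^2 * u * v * w^7 + (28) * ε^2 * u * v^2 * w^6 + (36) * ε^2 * u * v^3 * w^5 + (20) * ε^2 * u * v^4 * w^4 + (4) * ε^2 * u * v^5 * w^3 + (3) * ε^2 * u^2 * w^7 + (28) * ε^2 * u^2 * v * w^6 + (57) * ε^2 * u^2 * v^2 * w^5 + (46) * ε^2 * u^2 * v^3 * w^4 + (15) * ε^2 * u^2 * v^4 * w^3 + (1) * ε^2 * u^2 * v^5 * w^2 + (9) * ε^2 * u^3 * w^6 + (36) * ε^2 * u^3 * v * w^5 + (46) * ε^2 * u^3 * v^2 * w^4 + (23) * ε^2 *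 u^3 * v^3 * w^3 + (4) * ε^2 * u^3 * v^4 * w^2 + (9) * ε^2 * u^4 * w^5 + (20) * ε^2 * u^4 * v * w^4 + (15) * ε^2 * u^4 * v^2 * w^3 + (4) * ε^2 * u^4 * v^3 * w^2 + (3) * ε^2 * u^5 * w^4 + (4) * ε^2 * u^5 * v * w^3 + (1) * ε^2 * u^5 * v^2 * w^2 + (8) * ε^3 * v^3 * w^6 + (18) * ε^3 * v^4 * w^5 + (9) * ε^3 * v^5 * w^4 + ((-2)) * ε^3 * v^6 * w^3 + ((-1)) * ε^3 * v^9 + (21) * ε^3 * u * v^2 * w^6 + (56) * ε^3 * u * v^3 * w^5 + (50) * ε^3 * u * v^4 * w^4 + (16) * ε^3 * u * v^5 * w^3 + (1) * ε^3 * u * v^6 * w^2 + (21) * ε^3 * u^2 * v * w^6 + (74) * ε^3 * u^2 * v^2 * w^5 + (94) * ε^3 * u^2 * v^3 * w^4 + (50) * ε^3 * u^2 * v^4 * w^3 + (9) * ε^3 * u^2 * v^5 * w^2 + (8) * ε^3 * u^3 * w^6 + (56) * ε^3 * u^3 * v * w^5 + (94) * ε^3 * u^3 * v^2 * w^4 +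 (86) * ε^3 * u^3 * v^3 * w^3 + (18) * ε^3 * u^3 * v^4 * w^2 + (1) * ε^3 * u^3 * v^5 * w + ((-3)) * ε^3 * u^3 * v^6 + (18) * ε^3 * u^4 * w^5 + (50) * ε^3 * u^4 * v * w^4 + (50) * ε^3 * u^4 * v^2 * w^3 + (18) * ε^3 * u^4 * v^3 * w^2 + (2) * ε^3 * u^4 * v^4 * w + (9) * ε^3 * u^5 * w^4 + (16) * ε^3 * u^5 * v * w^3 + (9) * ε^3 * u^5 * v^2 * w^2 + (1) * ε^3 * u^5 * v^3 * w + ((-2)) * ε^3 * u^6 * w^3 + (1) * ε^3 * u^6 * v * w^2 + ((-3)) * ε^3 * u^6 * v^3 + ((-1)) * ε^3 * u^9 + (1) * ε^4 * v^3 * w^6 + (9) * ε^4 * v^4 * w^5 + (18) * ε^4 * v^5 * w^4 + (11) * ε^4 * v^6 * w^3 + (1) * ε^4 * v^9 + (7) * ε^4 * u * v^2 * w^6 + (36) * ε^4 * u * v^3 * w^5 + (60) * ε^4 * u * v^4 * w^4 + (40) * ε^4 * u * v^5 * w^3 + (9) * ε^4 * u * v^6 * w^2 + (7) * ε^4 *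 u^2 * v * w^6 + (57) * ε^4 * u^2 * v^2 * w^5 + (110) * ε^4 * u^2 * v^3 * w^4 + (88) * ε^4 * u^2 * v^4 * w^3 + (31) * ε^4 * u^2 * v^5 * w^2 + (3) * ε^4 * u^2 * v^6 * w + (1) * ε^4 * u^3 * w^6 + (36) * ε^4 * u^3 * v * w^5 + (110) * ε^4 * u^3 * v^2 * w^4 + (99) * ε^4 * u^3 * v^3 * w^3 + (52) * ε^4 * u^3 * v^4 * w^2 + (8) * ε^4 * u^3 * v^5 * w + (3) * ε^4 * u^3 * v^6 + (9) * ε^4 * u^4 * w^5 + (60) * ε^4 * u^4 * v * w^4 + (88) * ε^4 * u^4 * v^2 * w^3 + (52) * ε^4 * u^4 * v^3 * w^2 + (10) * ε^4 * u^4 * v^4 * w + (18) * ε^4 * u^5 * w^4 + (40) * ε^4 * u^5 * v * w^3 + (31) * ε^4 * u^5 * v^2 * w^2 + (8) * ε^4 * u^5 * v^3 * w + (11) * ε^4 * u^6 * w^3 + (9) * ε^4 * u^6 * v * w^2 + (3) * ε^4 * u^6 * v^2 * w + (3) * ε^4 * u^6 * v^3 + (1) * ε^4 * u^9 + (3) *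 ε^5 * v^4 * w^5 + (9) * ε^5 * v^5 * w^4 + (9) * ε^5 * v^6 * w^3 + (3) * ε^5 * v^7 * w^2 + (18) * ε^5 * u * v^3 * w^5 + (50) * ε^5 * u * v^4 * w^4 + (48) * ε^5 * u * v^5 * w^3 + (18) * ε^5 * u * v^6 * w^2 + (2) * ε^5 * u * v^7 * w + (27) * ε^5 * u^2 * v^2 * w^5 + (94) * ε^5 * u^2 * v^3 * w^4 + (110) * ε^5 * u^2 * v^4 * w^3 + (52) * ε^5 * u^2 * v^5 * w^2 + (9) * ε^5 * u^2 * v^6 * w + (18) * ε^5 * u^3 * v * w^5 + (94) * ε^5 * u^3 * v^2 * w^4 + (143) * ε^5 * u^3 * v^3 * w^3 + (91) * ε^5 * u^3 * v^4 * w^2 + (22) * ε^5 * u^3 * v^5 * w + (1) * ε^5 * u^3 * v^6 + (3) * ε^5 * u^4 * w^5 + (50) * ε^5 * u^4 * v * w^4 + (110) * ε^5 * u^4 * v^2 * w^3 + (91) * ε^5 * u^4 * v^3 * w^2 + (30) * ε^5 * u^4 * v^4 * w + (3) * ε^5 * u^4 * v^5 + (9) * ε^5 * u^5 * w^4 + (48)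 * ε^5 * u^5 * v * w^3 + (52) * ε^5 * u^5 * v^2 * w^2 + (22) * ε^5 * u^5 * v^3 * w + (3) * ε^5 * u^5 * v^4 + (9) * ε^5 * u^6 * w^3 + (18) * ε^5 * u^6 * v * w^2 + (9) * ε^5 * u^6 * v^2 * w + (1) * ε^5 * u^6 * v^3 + (3) * ε^5 * u^7 * w^2 + (2) * ε^5 * u^7 * v * w + (3) * ε^6 * v^5 * w^4 + (8) * ε^6 * v^6 * w^3 + (6) * ε^6 * v^7 * w^2 + ((-1)) * ε^6 * v^9 + (2) * ε^6 * u * v^3 * w^5 + (20) * ε^6 * u * v^4 * w^4 + (40) * ε^6 * u * v^5 * w^3 + (28) * ε^6 * u * v^6 * w^2 + (6) * ε^6 * u * v^7 * w + (5) * ε^6 * u^2 * v^2 * w^5 + (46) * ε^6 * u^2 * v^3 * w^4 + (88) * ε^6 * u^2 * v^4 * w^3 + (66) * ε^6 * u^2 * v^5 * w^2 + (21) * ε^6 * u^2 * v^6 * w + (2) * ε^6 * u^2 * v^7 + (2) * ε^6 * u^3 * v * w^5 + (46) * ε^6 * u^3 * v^2 * w^4 + (120) * ε^6 * u^3 * v^3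 * w^3 + (90) * ε^6 * u^3 * v^4 * w^2 + (34) * ε^6 * u^3 * v^5 * w + (2) * ε^6 * u^3 * v^6 + (20) * ε^6 * u^4 * v * w^4 + (88) * ε^6 * u^4 * v^2 * w^3 + (90) * ε^6 * u^4 * v^3 * w^2 + (38) * ε^6 * u^4 * v^4 * w + (5) * ε^6 * u^4 * v^5 + (3) * ε^6 * u^5 * w^4 + (40) * ε^6 * u^5 * v * w^3 + (66) * ε^6 * u^5 * v^2 * w^2 + (34) * ε^6 * u^5 * v^3 * w + (5) * ε^6 * u^5 * v^4 + (8) * ε^6 * u^6 * w^3 + (28) * ε^6 * u^6 * v * w^2 + (21) * ε^6 * u^6 * v^2 * w + (2) * ε^6 * u^6 * v^3 + (6) * ε^6 * u^7 * w^2 + (6) * ε^6 * u^7 * v * w + (2) * ε^6 * u^7 * v^2 + ((-1)) * ε^6 * u^9 + (1) * ε^7 * v^6 * w^3 + (3) * ε^7 * v^7 * w^2 + (3) * ε^7 * v^8 * w + (1) * ε^7 * v^9 + (5) * ε^7 * u * v^4 * w^4 + (16) * ε^7 * u * v^5 * w^3 + (18) * ε^7 * u * v^6 * w^2 + (8) *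 ε^7 * u * v^7 * w + (1) * ε^7 * u * v^8 + (14) * ε^7 * u^2 * v^3 * w^4 + (50) * ε^7 * u^2 * v^4 * w^3 + (52) * ε^7 * u^2 * v^5 * w^2 + (18) * ε^7 * u^2 * v^6 * w + (2) * ε^7 * u^2 * v^7 + (14) * ε^7 * u^3 * v^2 * w^4 + (65) * ε^7 * u^3 * v^3 * w^3 + (91) * ε^7 * u^3 * v^4 * w^2 + (38) * ε^7 * u^3 * v^5 * w + (7) * ε^7 * u^3 * v^6 + (5) * ε^7 * u^4 * v * w^4 + (50) * ε^7 * u^4 * v^2 * w^3 + (91) * ε^7 * u^4 * v^3 * w^2 + (50) * ε^7 * u^4 * v^4 * w + (9) * ε^7 * u^4 * v^5 + (16) * ε^7 * u^5 * v * w^3 + (52) * ε^7 * u^5 * v^2 * w^2 + (38) * ε^7 * u^5 * v^3 * w + (9) * ε^7 * u^5 * v^4 + (1) * ε^7 * u^6 * w^3 + (18) * ε^7 * u^6 * v * w^2 + (18) * ε^7 * u^6 * v^2 * w + (7) * ε^7 * u^6 * v^3 + (3) * ε^7 * u^7 * w^2 + (8) * ε^7 * u^7 * v * w + (2) * ε^7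 * u^7 * v^2 + (3) * ε^7 * u^8 * w + (1) * ε^7 * u^8 * v + (1) * ε^7 * u^9 + (4) * ε^8 * u * v^5 * w^3 + (9) * ε^8 * u * v^6 * w^2 + (6) * ε^8 * u * v^7 * w + (1) * ε^8 * u * v^8 + (1) * ε^8 * u^2 * v^3 * w^4 + (15) * ε^8 * u^2 * v^4 * w^3 + (31) * ε^8 * u^2 * v^5 * w^2 + (21) * ε^8 * u^2 * v^6 * w + (4) * ε^8 * u^2 * v^7 + (1) * ε^8 * u^3 * v^2 * w^4 + (23) * ε^8 * u^3 * v^3 * w^3 + (52) * ε^8 * u^3 * v^4 * w^2 + (34) * ε^8 * u^3 * v^5 * w + (7) * ε^8 * u^3 * v^6 + (15) * ε^8 * u^4 * v^2 * w^3 + (52) * ε^8 * u^4 * v^3 * w^2 + (38) * ε^8 * u^4 * v^4 * w + (8) * ε^8 * u^4 * v^5 + (4) * ε^8 * u^5 * v * w^3 + (31) * ε^8 * u^5 * v^2 * w^2 + (34) * ε^8 * u^5 * v^3 * w + (8) * ε^8 * u^5 * v^4 + (9) * ε^8 * u^6 * v * w^2 + (21) * ε^8 * u^6 * v^2 * w +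 (7) * ε^8 * u^6 * v^3 + (6) * ε^8 * u^7 * v * w + (4) * ε^8 * u^7 * v^2 + (1) * ε^8 * u^8 * v + (1) * ε^9 * u * v^6 * w^2 + (2) * ε^9 * u * v^7 * w + (1) * ε^9 * u * v^8 + (2) * ε^9 * u^2 * v^4 * w^3 + (9) * ε^9 * u^2 * v^5 * w^2 + (9) * ε^9 * u^2 * v^6 * w + (2) * ε^9 * u^2 * v^7 + (4) * ε^9 * u^3 * v^3 * w^3 + (18) * ε^9 * u^3 * v^4 * w^2 + (22) * ε^9 * u^3 * v^5 * w + (4) * ε^9 * u^3 * v^6 + (2) * ε^9 * u^4 * v^2 * w^3 + (18) * ε^9 * u^4 * v^3 * w^2 + (30) * ε^9 * u^4 * v^4 * w + (9) * ε^9 * u^4 * v^5 + (9) * ε^9 * u^5 * v^2 * w^2 + (22) * ε^9 * u^5 * v^3 * w + (9) * ε^9 * u^5 * v^4 + (1) * ε^9 * u^6 * v * w^2 + (9) * ε^9 * u^6 * v^2 * w + (4) * ε^9 * u^6 * v^3 + (2) * ε^9 * u^7 * v * w + (2) * ε^9 * u^7 * v^2 + (1) * ε^9 * u^8 * v + (1)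 * ε^10 * u^2 * v^5 * w^2 + (3) * ε^10 * u^2 * v^6 * w + (2) * ε^10 * u^2 * v^7 + (4) * ε^10 * u^3 * v^4 * w^2 + (8) * ε^10 * u^3 * v^5 * w + (5) * ε^10 * u^3 * v^6 + (4) * ε^10 * u^4 * v^3 * w^2 + (10) * ε^10 * u^4 * v^4 * w + (5) * ε^10 * u^4 * v^5 + (1) * ε^10 * u^5 * v^2 * w^2 + (8) * ε^10 * u^5 * v^3 * w + (5) * ε^10 * u^5 * v^4 + (3) * ε^10 * u^6 * v^2 * w + (5) * ε^10 * u^6 * v^3 + (2) * ε^10 * u^7 * v^2 + (1) * ε^11 * u^3 * v^5 * w + (1) * ε^11 * u^3 * v^6 + (2) * ε^11 * u^4 * v^4 * w + (3) * ε^11 * u^4 * v^5 + (1) * ε^11 * u^5 * v^3 * w + (3) * ε^11 * u^5 * v^4 + (1) * ε^11 * u^6 * v^3) * hquad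

set_option maxRecDepth 10000 in
lemma hP : pC'12 = X 0 * X 1 * X 2 *
    ((X 0 ^ 3 + X 1 ^ 3 + X 2 ^ 3) ^ 3 - 27 * X 0 ^ 3 * X 1 ^ 3 * X 2 ^ 3) := by
  apply MvPolynomial.funext
  intro x
  simp only [pC'12, _root_.map_mul, _root_.map_add, map_sub, map_pow, eval_X, eval_C, map_ofNat]
  linear_combination x 0 * x 1 * x 2 * prod9 (x 0) (x 1) (x 2)

lemma hn (n : ℕ) [n.AtLeastTwo] :
    (OfNat.ofNat n : MvPolynomial (Fin 3) ℂ) = C (OfNat.ofNat n) := (map_ofNat _ _).symm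

lemma dC6_0 : MvPolynomial.pderiv (0:Fin 3) pC6 = ((-30)) * X 0^2 * X 2^3 + ((-30)) * X 0^2 * X 1^3 + (6) * X 0^5 := by
  simp [pC6, hn 10, hn 4, hn 6, hn 228, pderiv_mul, pderiv_pow, pderiv_X, pderiv_C]
  simp only [← hn 10, ← hn 4, ← hn 6, ← hn 228]
  ring

lemma dC6_1 : MvPolynomial.pderiv (1:Fin 3) pC6 = ((-30)) * X 1^2 * X 2^3 + (6) * X 1^5 + ((-30)) * X 0^3 * X 1^2 := by
  simp [pC6, hn 10, hn 4, hn 6, hn 228, pderiv_mul, pderiv_pow, pderiv_X, pderiv_C]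
  simp only [← hn 10, ← hn 4, ← hn 6, ← hn 228]
  ring

lemma dC6_2 : MvPolynomial.pderiv (2:Fin 3) pC6 = (6) * X 2^5 + ((-30)) * X 1^3 * X 2^2 + ((-30)) * X 0^3 * X 2^2 := by
  simp [pC6, hn 10, hn 4, hn 6, hn 228, pderiv_mul, pderiv_pow, pderiv_X, pderiv_C]
  simp only [← hn 10, ← hn 4, ← hn 6, ← hn 228]
  ring

lemma dC9_0 : MvPolynomial.pderiv (0:Fin 3) pC9 = (3) * X 0^2 * X 2^6 + ((-3)) * X 0^2 * X 1^6 + ((-6)) * X 0^5 * X 2^3 + (6) * X 0^5 * X 1^3 := by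
  simp [pC9, hn 10, hn 4, hn 6, hn 228, pderiv_mul, pderiv_pow, pderiv_X, pderiv_C]
  simp only [← hn 10, ← hn 4, ← hn 6, ← hn 228]
  ring

lemma dC9_1 : MvPolynomial.pderiv (1:Fin 3) pC9 = ((-3)) * X 1^2 * X 2^6 + (6) * X 1^5 * X 2^3 + ((-6)) * X 0^3 * X 1^5 + (3) * X 0^6 * X 1^2 := by
  simp [pC9, hn 10, hn 4, hn 6, hn 228, pderiv_mul, pderiv_pow, pderiv_X, pderiv_C]
  simp only [← hn 10, ← hn 4, ← hn 6, ← hn 228]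
  ring

lemma dC9_2 : MvPolynomial.pderiv (2:Fin 3) pC9 = ((-6)) * X 1^3 * X 2^5 + (3) * X 1^6 * X 2^2 + (6) * X 0^3 * X 2^5 + ((-3)) * X 0^6 * X 2^2 := by
  simp [pC9, hn 10, hn 4, hn 6, hn 228, pderiv_mul, pderiv_pow, pderiv_X, pderiv_C]
  simp only [← hn 10, ← hn 4, ← hn 6, ← hn 228]
  ring

lemma dC12_0 : MvPolynomial.pderiv (0:Fin 3) pC12 = (12) * X 0^2 * X 2^9 + (684) * X 0^2 * X 1^3 * X 2^6 + (684) * X 0^2 * X 1^6 * X 2^3 + (12) * X 0^2 * X 1^9 + (36) * X 0^5 * X 2^6 + (1368) * X 0^5 * X 1^3 * X 2^3 + (36) * X 0^5 * X 1^6 + (36) * X 0^8 * X 2^3 + (36) * X 0^8 * X 1^3 + (12) * X 0^11 := by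
  simp [pC12, hn 10, hn 4, hn 6, hn 228, pderiv_mul, pderiv_pow, pderiv_X, pderiv_C]
  simp only [← hn 10, ← hn 4, ← hn 6, ← hn 228]
  ring

lemma dC12_1 : MvPolynomial.pderiv (1:Fin 3) pC12 = (12) * X 1^2 * X 2^9 + (36) * X 1^5 * X 2^6 + (36) * X 1^8 * X 2^3 + (12) * X 1^11 + (684) * X 0^3 * X 1^2 * X 2^6 + (1368) * X 0^3 * X 1^5 * X 2^3 + (36) * X 0^3 * X 1^8 + (684) * X 0^6 * X 1^2 * X 2^3 + (36) * X 0^6 * X 1^5 + (12) * X 0^9 * X 1^2 := by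
  simp [pC12, hn 10, hn 4, hn 6, hn 228, pderiv_mul, pderiv_pow, pderiv_X, pderiv_C]
  simp only [← hn 10, ← hn 4, ← hn 6, ← hn 228]
  ring

lemma dC12_2 : MvPolynomial.pderiv (2:Fin 3) pC12 = (12) * X 2^11 + (36) * X 1^3 * X 2^8 + (36) * X 1^6 * X 2^5 + (12) * X 1^9 * X 2^2 + (36) * X 0^3 * X 2^8 + (1368) * X 0^3 * X 1^3 * X 2^5 + (684) * X 0^3 * X 1^6 * X 2^2 + (36) * X 0^6 * X 2^5 + (684) * X 0^6 * X 1^3 * X 2^2 + (12) * X 0^9 * X 2^2 := by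
  simp [pC12, hn 10, hn 4, hn 6, hn 228, pderiv_mul, pderiv_pow, pderiv_X, pderiv_C]
  simp only [← hn 10, ← hn 4, ← hn 6, ← hn 228]
  ring



/-- The Jacobian determinant of (C₆, C₉, C₁₂) with respect to (u,v,w)
is a nonzero constant multiple of C'₁₂², as polynomials in u, v, w. -/
theorem jacobian_eq_const_mul_C'12_sq :
    ∃ k : ℂ, k ≠ 0 ∧ jacobianC = MvPolynomial.C k * pC'12 ^ 2 := by
  refine ⟨2592, by norm_num, ?_⟩
  rw [hP, jacobianC, Matrix.det_fin_three]
  simp only [Matrix.of_apply, Matrix.cons_val', Matrix.cons_val_zero, Matrix.cons_val_one,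
    Matrix.head_cons, Matrix.head_fin_const, Matrix.empty_val', Matrix.cons_val_fin_one,
    Matrix.cons_val_two, Matrix.tail_cons]
  rw [dC6_0, dC6_1, dC6_2, dC9_0, dC9_1, dC9_2, dC12_0, dC12_1, dC12_2, ← hn 2592]
  ring
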